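/- Let f : [0,1]^d → [0,∞) be continuous and satisfy Assumption A, and let S be the inverse Knothe–Rosenblatt map of f. Then S maps Borel subsets of [0,1]^d to Borel subsets of [0,1]^d; consequently, the inverse map T := S^{-1} : [0,1]^d → [0,1]^d is a triangular, monotone (in each component strictly increasing in the last variable), Borel measurable bijection. -/

import Mathlib

open MeasureTheory

noncomputable section

def cube (d : ℕ) : Set (Fin d → ℝ) := Set.univ.pi fun _ => Set.Icc (0:ℝ) 1

noncomputable def sFun (d : ℕ) (f : (Fin d → ℝ) → ℝ) (j : ℕ) (x : Fin d → ℝ) : ℝ :=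
  ∫ y in cube d, f (fun i => if (i : ℕ) < j then x i else y i)

noncomputable def KRinv (d : ℕ) (f : (Fin d → ℝ) → ℝ) (x : Fin d → ℝ) : Fin d → ℝ :=
  fun j => if 0 < sFun d f (j : ℕ) x
    then (∫ t in (0:ℝ)..(x j), sFun d f ((j : ℕ) + 1) (Function.update x j t)) / sFun d f (j : ℕ) x
    else x j

def AssumptionA (d : ℕ) (f : (Fin d → ℝ) → ℝ) : Prop :=
  volume {x : Fin d → ℝ | x ∈ cube d ∧ f x = 0} = 0 ∧
  ∀ i : Fin d, ∀ x ∈ cube d,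
    (∀ t ∈ Set.Icc (0:ℝ) 1, f (Function.update x i t) = 0) ∨
    volume {t : ℝ | t ∈ Set.Icc (0:ℝ) 1 ∧ f (Function.update x i t) = 0} = 0

open Classical in
noncomputable def KRmap (d : ℕ) (f : (Fin d → ℝ) → ℝ) (y : Fin d → ℝ) : Fin d → ℝ :=
  if y ∈ cube d then Function.invFunOn (KRinv d f) (cube d) y else y

namespace KR

open Set Function

variable {d : ℕ} {f : (Fin d → ℝ) → ℝ}

/-- the mixing map -/
def mixf (d : ℕ) (j : ℕ) (x y : Fin d → ℝ) : Fin d → ℝ := fun i => if (i : ℕ) < j then x i else y i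

lemma sFun_eq (j : ℕ) (x : Fin d → ℝ) : sFun d f j x = ∫ y in cube d, f (mixf d j x y) := rfl

lemma cube_compact : IsCompact (cube d) := isCompact_univ_pi fun _ => isCompact_Icc

lemma cube_closed : IsClosed (cube d) := isClosed_set_pi fun _ _ => isClosed_Icc

lemma cube_meas : MeasurableSet (cube d) := cube_closed.measurableSet

lemma mem_cube {x : Fin d → ℝ} : x ∈ cube d ↔ ∀ i, x i ∈ Set.Icc (0:ℝ) 1 := Set.mem_univ_pi

lemma volume_cube : volume (cube d) = 1 := by
  rw [cube, volume_pi_pi]; simp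

lemma mix_mem {j : ℕ} {x y : Fin d → ℝ} (hx : x ∈ cube d) (hy : y ∈ cube d) :
    mixf d j x y ∈ cube d := by
  rw [mem_cube] at *
  intro i
  unfold mixf
  split
  · exact hx i
  · exact hy i

lemma continuous_mixf {j : ℕ} {x : Fin d → ℝ} : Continuous (fun y => mixf d j x y) := by
  refine continuous_pi fun i => ?_
  unfold mixf
  split
  · exact continuous_const
  · exact continuous_apply i

lemma cont_mix (hfc : ContinuousOn f (cube d)) {x : Fin d → ℝ} (hx : x ∈ cube d) (j : ℕ) :
    ContinuousOn (fun y => f (mixf d j x y)) (cube d) :=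
  hfc.comp continuous_mixf.continuousOn fun _ hy => mix_mem hx hy

lemma integrableOn_mix (hfc : ContinuousOn f (cube d)) {x : Fin d → ℝ} (hx : x ∈ cube d) (j : ℕ) :
    IntegrableOn (fun y => f (mixf d j x y)) (cube d) :=
  (cont_mix hfc hx j).integrableOn_compact cube_compact

lemma sFun_nonneg (hfnn : ∀ x ∈ cube d, 0 ≤ f x) {x : Fin d → ℝ} (hx : x ∈ cube d) (j : ℕ) :
    0 ≤ sFun d f j x :=
  setIntegral_nonneg cube_meas fun y hy => hfnn _ (mix_mem hx hy)

lemma sFun_congr {j : ℕ} {x y : Fin d → ℝ} (h : ∀ i : Fin d, (i : ℕ) < j → x i = y i) :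
    sFun d f j x = sFun d f j y := by
  unfold sFun
  congr 1
  ext z
  congr 1
  ext i
  split
  · exact h i (by assumption)
  · rfl

lemma exists_bound (hfc : ContinuousOn f (cube d)) : ∃ C : ℝ, 0 ≤ C ∧ ∀ x ∈ cube d, |f x| ≤ C := by
  obtain ⟨C, hC⟩ := cube_compact.exists_bound_of_continuousOn hfc
  exact ⟨max C 0, le_max_right _ _, fun x hx => le_trans (hC x hx) (le_max_left _ _)⟩

lemma update_mem_cube {x : Fin d → ℝ} (hx : x ∈ cube d) (j : Fin d) {t : ℝ}
    (ht : t ∈ Set.Icc (0:ℝ) 1) : Function.update x j t ∈ cube d := by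
  rw [mem_cube] at *
  intro i
  rcases eq_or_ne i j with rfl | h
  · simpa using ht
  · simpa [Function.update_of_ne h] using hx i

lemma sFun_continuousOn (hfc : ContinuousOn f (cube d)) (j : ℕ) :
    ContinuousOn (sFun d f j) (cube d) := by
  obtain ⟨C, hC0, hC⟩ := exists_bound hfc
  apply continuousOn_of_dominated (bound := fun _ => C)
  · intro x hx
    exact (cont_mix hfc hx j).aestronglyMeasurable cube_meas
  · intro x hx
    filter_upwards [ae_restrict_mem cube_meas] with y hy
    rw [Real.norm_eq_abs]
    exact hC _ (mix_mem hx hy)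
  · refine integrableOn_const ?_
    rw [volume_cube]; exact ENNReal.one_ne_top
  · filter_upwards [ae_restrict_mem cube_meas] with y hy
    have hcont : Continuous (fun x : Fin d → ℝ => mixf d j x y) := by
      refine continuous_pi fun i => ?_
      unfold mixf
      split
      · exact continuous_apply i
      · exact continuous_const
    exact hfc.comp hcont.continuousOn fun x hx => mix_mem hx hy

lemma insertNth_mem_cube {n : ℕ} {j : Fin (n+1)} {t : ℝ} {z : Fin n → ℝ}
    (ht : t ∈ Set.Icc (0:ℝ) 1) (hz : z ∈ cube n) : j.insertNth t z ∈ cube (n+1) := by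
  rw [mem_cube]
  refine (Fin.forall_iff_succAbove j).2 ⟨?_, fun k => ?_⟩
  · simpa [Fin.insertNth_apply_same] using ht
  · simpa [Fin.insertNth_apply_succAbove] using (mem_cube.1 hz) k

lemma cube_preimage {n : ℕ} (j : Fin (n+1)) :
    cube (n+1) = (MeasurableEquiv.piFinSuccAbove (fun _ => ℝ) j) ⁻¹' ((Set.Icc (0:ℝ) 1) ×ˢ cube n) := by
  ext x
  show x ∈ cube (n+1) ↔ x j ∈ Set.Icc (0:ℝ) 1 ∧ (fun k => x (j.succAbove k)) ∈ cube n
  rw [mem_cube, mem_cube]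
  exact (Fin.forall_iff_succAbove j).trans (by simp)

lemma integral_insertNth {n : ℕ} {G : (Fin (n+1) → ℝ) → ℝ} (hG : ContinuousOn G (cube (n+1)))
    (j : Fin (n+1)) :
    ∫ y in cube (n+1), G y = ∫ t in Set.Icc (0:ℝ) 1, ∫ z in cube n, G (j.insertNth t z) := by
  set e := MeasurableEquiv.piFinSuccAbove (fun _ : Fin (n+1) => ℝ) j with he
  have hMP : MeasurePreserving e volume ((volume : Measure ℝ).prod (volume : Measure (Fin n → ℝ))) :=
    measurePreserving_piFinSuccAbove (fun _ : Fin (n+1) => (volume : Measure ℝ)) j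
  have hint : IntegrableOn (fun p : ℝ × (Fin n → ℝ) => G (j.insertNth p.1 p.2))
      ((Set.Icc (0:ℝ) 1) ×ˢ cube n) ((volume : Measure ℝ).prod (volume : Measure (Fin n → ℝ))) := by
    refine ContinuousOn.integrableOn_compact (isCompact_Icc.prod cube_compact) ?_
    have hci : Continuous (fun p : ℝ × (Fin n → ℝ) => Fin.insertNth (α := fun _ => ℝ) j p.1 p.2) :=
      Continuous.finInsertNth (A := fun _ => ℝ) j continuous_fst continuous_snd
    refine hG.comp hci.continuousOn ?_
    rintro ⟨t, z⟩ ⟨ht, hz⟩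
    exact insertNth_mem_cube ht hz
  calc ∫ y in cube (n+1), G y
      = ∫ y in e ⁻¹' ((Set.Icc (0:ℝ) 1) ×ˢ cube n), (fun p : ℝ × (Fin n → ℝ) => G (j.insertNth p.1 p.2)) (e y) := by
        rw [← cube_preimage]
        refine setIntegral_congr_fun cube_meas fun y _ => ?_
        show G y = G (j.insertNth (y j) (j.removeNth y))
        rw [Fin.insertNth_self_removeNth]
    _ = ∫ p in ((Set.Icc (0:ℝ) 1) ×ˢ cube n), G (j.insertNth p.1 p.2)
          ∂((volume : Measure ℝ).prod (volume : Measure (Fin n → ℝ))) :=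
        hMP.setIntegral_preimage_emb e.measurableEmbedding
          (fun p : ℝ × (Fin n → ℝ) => G (j.insertNth p.1 p.2)) ((Set.Icc (0:ℝ) 1) ×ˢ cube n)
    _ = ∫ t in Set.Icc (0:ℝ) 1, ∫ z in cube n, G (j.insertNth t z) :=
        setIntegral_prod _ hint

lemma marginal {n : ℕ} {G : (Fin (n+1) → ℝ) → ℝ} (hG : ContinuousOn G (cube (n+1)))
    (j : Fin (n+1)) :
    ∫ y in cube (n+1), G y
      = ∫ t in Set.Icc (0:ℝ) 1, ∫ y in cube (n+1), G (Function.update y j t) := by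
  rw [integral_insertNth hG j]
  refine setIntegral_congr_fun measurableSet_Icc fun t ht => ?_
  have hGt : ContinuousOn (fun y => G (Function.update y j t)) (cube (n+1)) := by
    refine hG.comp (continuous_id.update j continuous_const).continuousOn fun y hy => ?_
    exact update_mem_cube hy j ht
  rw [integral_insertNth hGt j]
  have : ∀ s ∈ Set.Icc (0:ℝ) 1,
      (∫ z in cube n, G (Function.update (j.insertNth s z) j t))
        = ∫ z in cube n, G (j.insertNth t z) := by
    intro s _
    refine setIntegral_congr_fun cube_meas fun z _ => ?_
    rw [Fin.update_insertNth]
  rw [setIntegral_congr_fun measurableSet_Icc this, setIntegral_const]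
  simp

lemma sFun_marginal (hfc : ContinuousOn f (cube d)) {x : Fin d → ℝ} (hx : x ∈ cube d) (j : Fin d) :
    ∫ t in Set.Icc (0:ℝ) 1, sFun d f ((j:ℕ)+1) (Function.update x j t) = sFun d f j x := by
  obtain ⟨n, rfl⟩ : ∃ n, d = n + 1 := ⟨d - 1, (Nat.succ_pred_eq_of_pos j.pos).symm⟩
  rw [sFun_eq (j:ℕ) x, marginal (cont_mix hfc hx (j:ℕ)) j]
  refine setIntegral_congr_fun measurableSet_Icc fun t _ => ?_
  refine setIntegral_congr_fun cube_meas fun y _ => ?_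
  show f (mixf (n+1) ((j:ℕ)+1) (Function.update x j t) y) = f (mixf (n+1) (j:ℕ) x (Function.update y j t))
  congr 1
  funext i
  unfold mixf
  rcases lt_trichotomy (i:ℕ) (j:ℕ) with h | h | h
  · have hij : i ≠ j := fun hh => by simp [hh] at h
    rw [if_pos h, if_pos (Nat.lt_succ_of_lt h), Function.update_of_ne hij]
  · have hij : i = j := Fin.ext h
    subst hij
    rw [if_neg (lt_irrefl _), if_pos (Nat.lt_succ_of_le h.le), Function.update_self,
      Function.update_self]
  · have hij : i ≠ j := fun hh => by simp [hh] at h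
    rw [if_neg (not_lt.2 h.le), if_neg (not_lt.2 (Nat.succ_le_of_lt h)), Function.update_of_ne hij]

/-- slice function -/
def gF (d : ℕ) (f : (Fin d → ℝ) → ℝ) (x : Fin d → ℝ) (j : Fin d) (t : ℝ) : ℝ :=
  sFun d f ((j:ℕ)+1) (Function.update x j t)

/-- primitive -/
def phiF (d : ℕ) (f : (Fin d → ℝ) → ℝ) (x : Fin d → ℝ) (j : Fin d) (t : ℝ) : ℝ :=
  ∫ s in (0:ℝ)..t, gF d f x j s

lemma KRinv_apply (x : Fin d → ℝ) (j : Fin d) :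
    KRinv d f x j = if 0 < sFun d f (j:ℕ) x then phiF d f x j (x j) / sFun d f (j:ℕ) x else x j := rfl

lemma gF_contOn (hfc : ContinuousOn f (cube d)) {x : Fin d → ℝ} (hx : x ∈ cube d) (j : Fin d) :
    ContinuousOn (gF d f x j) (Set.Icc (0:ℝ) 1) := by
  have hupd : Continuous (fun t : ℝ => Function.update x j t) := by
    refine continuous_pi fun i => ?_
    by_cases h : i = j
    · simp only [Function.update_apply, h, if_pos]
      exact continuous_id
    · simp only [Function.update_apply, if_neg h]
      exact continuous_const
  exact (sFun_continuousOn hfc ((j:ℕ)+1)).comp hupd.continuousOn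
    fun t ht => update_mem_cube hx j ht

lemma gF_nonneg (hfnn : ∀ x ∈ cube d, 0 ≤ f x) {x : Fin d → ℝ} (hx : x ∈ cube d) (j : Fin d)
    {t : ℝ} (ht : t ∈ Set.Icc (0:ℝ) 1) : 0 ≤ gF d f x j t :=
  sFun_nonneg hfnn (update_mem_cube hx j ht) _

lemma gF_intOn (hfc : ContinuousOn f (cube d)) {x : Fin d → ℝ} (hx : x ∈ cube d) (j : Fin d) :
    IntegrableOn (gF d f x j) (Set.Icc (0:ℝ) 1) :=
  (gF_contOn hfc hx j).integrableOn_compact isCompact_Icc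

lemma gF_ii (hfc : ContinuousOn f (cube d)) {x : Fin d → ℝ} (hx : x ∈ cube d) (j : Fin d)
    {a b : ℝ} (ha : a ∈ Set.Icc (0:ℝ) 1) (hb : b ∈ Set.Icc (0:ℝ) 1) :
    IntervalIntegrable (gF d f x j) volume a b :=
  ((gF_intOn hfc hx j).mono_set (Set.uIcc_subset_Icc ha hb)).intervalIntegrable

lemma phiF_sub (hfc : ContinuousOn f (cube d)) {x : Fin d → ℝ} (hx : x ∈ cube d) (j : Fin d)
    {a b : ℝ} (ha : a ∈ Set.Icc (0:ℝ) 1) (hb : b ∈ Set.Icc (0:ℝ) 1) :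
    phiF d f x j b - phiF d f x j a = ∫ s in a..b, gF d f x j s := by
  have h0 : (0:ℝ) ∈ Set.Icc (0:ℝ) 1 := Set.left_mem_Icc.2 zero_le_one
  have := intervalIntegral.integral_add_adjacent_intervals
    (gF_ii hfc hx j h0 ha) (gF_ii hfc hx j ha hb)
  unfold phiF
  linarith [this]

lemma phiF_mono (hfc : ContinuousOn f (cube d)) (hfnn : ∀ x ∈ cube d, 0 ≤ f x)
    {x : Fin d → ℝ} (hx : x ∈ cube d) (j : Fin d) :
    MonotoneOn (phiF d f x j) (Set.Icc (0:ℝ) 1) := by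
  intro a ha b hb hab
  have h := phiF_sub hfc hx j ha hb
  have hnn : 0 ≤ ∫ s in a..b, gF d f x j s := by
    refine intervalIntegral.integral_nonneg hab fun u hu => ?_
    exact gF_nonneg hfnn hx j ⟨le_trans ha.1 hu.1, le_trans hu.2 hb.2⟩
  linarith

lemma phiF_zero (x : Fin d → ℝ) (j : Fin d) : phiF d f x j 0 = 0 := by
  simp [phiF]

lemma phiF_one (hfc : ContinuousOn f (cube d)) {x : Fin d → ℝ} (hx : x ∈ cube d) (j : Fin d) :
    phiF d f x j 1 = sFun d f (j:ℕ) x := by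
  rw [← sFun_marginal hfc hx j, phiF, intervalIntegral.integral_of_le zero_le_one,
    ← integral_Icc_eq_integral_Ioc]
  rfl

lemma phiF_contOn (hfc : ContinuousOn f (cube d)) {x : Fin d → ℝ} (hx : x ∈ cube d) (j : Fin d) :
    ContinuousOn (phiF d f x j) (Set.Icc (0:ℝ) 1) := by
  have := intervalIntegral.continuousOn_primitive_interval (a := 0) (b := 1)
    (μ := volume) (f := gF d f x j) ?_
  · rwa [Set.uIcc_of_le zero_le_one] at this
  · rw [Set.uIcc_of_le zero_le_one]; exact gF_intOn hfc hx j

lemma phiF_nonneg (hfc : ContinuousOn f (cube d)) (hfnn : ∀ x ∈ cube d, 0 ≤ f x)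
    {x : Fin d → ℝ} (hx : x ∈ cube d) (j : Fin d) {t : ℝ} (ht : t ∈ Set.Icc (0:ℝ) 1) :
    0 ≤ phiF d f x j t := by
  have := phiF_mono hfc hfnn hx j (Set.left_mem_Icc.2 zero_le_one) ht ht.1
  rwa [phiF_zero] at this

lemma phiF_le (hfc : ContinuousOn f (cube d)) (hfnn : ∀ x ∈ cube d, 0 ≤ f x)
    {x : Fin d → ℝ} (hx : x ∈ cube d) (j : Fin d) {t : ℝ} (ht : t ∈ Set.Icc (0:ℝ) 1) :
    phiF d f x j t ≤ sFun d f (j:ℕ) x := by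
  have := phiF_mono hfc hfnn hx j ht (Set.right_mem_Icc.2 zero_le_one) ht.2
  rwa [phiF_one hfc hx j] at this

/-- a nonnegative continuous function on the cube with zero integral vanishes -/
lemma eq_zero_of_integral_zero {G : (Fin d → ℝ) → ℝ} (hGc : ContinuousOn G (cube d))
    (hGnn : ∀ y ∈ cube d, 0 ≤ G y) (h0 : ∫ y in cube d, G y = 0) :
    ∀ y ∈ cube d, G y = 0 := by
  by_contra hcon
  push_neg at hcon
  obtain ⟨y0, hy0c, hy0⟩ := hcon
  have hpos : 0 < G y0 := lt_of_le_of_ne (hGnn y0 hy0c) (Ne.symm hy0)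
  have hev : ∀ᶠ z in nhdsWithin y0 (cube d), G y0 / 2 < G z :=
    (hGc y0 hy0c) (Ioi_mem_nhds (half_lt_self hpos))
  obtain ⟨ε, hε, hball⟩ := Metric.mem_nhdsWithin_iff.1 hev
  set B : Set (Fin d → ℝ) :=
    Set.univ.pi fun i => Set.Icc (max 0 (y0 i - ε/2)) (min 1 (y0 i + ε/2)) with hB
  have hmemIcc : ∀ i, y0 i ∈ Set.Icc (0:ℝ) 1 := mem_cube.1 hy0c
  have hlt : ∀ i : Fin d, max 0 (y0 i - ε/2) < min 1 (y0 i + ε/2) := by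
    intro i
    have h1 := (hmemIcc i).1
    have h2 := (hmemIcc i).2
    refine max_lt (lt_min zero_lt_one (by linarith)) (lt_min (by linarith) (by linarith))
  have hBcube : B ⊆ cube d := by
    intro z hz
    rw [mem_cube]
    intro i
    have := hz i (Set.mem_univ i)
    exact ⟨le_trans (le_max_left _ _) this.1, le_trans this.2 (min_le_left _ _)⟩
  have hBball : B ⊆ Metric.ball y0 ε := by
    intro z hz
    rw [Metric.mem_ball, dist_pi_lt_iff hε]
    intro i
    have h := hz i (Set.mem_univ i)
    rw [Real.dist_eq, abs_sub_lt_iff]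
    constructor
    · have := h.2
      have := min_le_right 1 (y0 i + ε/2)
      linarith [h.2.trans (min_le_right 1 (y0 i + ε/2))]
    · have := le_max_right 0 (y0 i - ε/2)
      linarith [this.trans h.1]
  have hBmeas : MeasurableSet B := MeasurableSet.univ_pi fun i => measurableSet_Icc
  have hBpos : 0 < volume B := by
    rw [hB, volume_pi_pi]
    refine CanonicallyOrderedAdd.prod_pos.2 fun i _ => ?_
    rw [Real.volume_Icc]
    exact ENNReal.ofReal_pos.2 (by linarith [hlt i])
  have hBfin : volume B ≠ ⊤ := by
    refine ne_of_lt (lt_of_le_of_lt (measure_mono hBcube) ?_)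
    rw [volume_cube]; exact ENNReal.one_lt_top
  have hGint : IntegrableOn G (cube d) := hGc.integrableOn_compact cube_compact
  have hle1 : ∫ y in B, G y ≤ ∫ y in cube d, G y := by
    refine setIntegral_mono_set hGint ?_ (Filter.Eventually.of_forall ?_)
    · filter_upwards [ae_restrict_mem cube_meas] with z hz
      exact hGnn z hz
    · intro z hz
      exact hBcube hz
  have hge : G y0 / 2 * (volume B).toReal ≤ ∫ y in B, G y := by
    refine setIntegral_ge_of_const_le_real hBmeas hBfin (fun z hz => ?_) (hGint.mono_set hBcube)
    exact le_of_lt (hball ⟨hBball hz, hBcube hz⟩)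
  have htR : 0 < (volume B).toReal := ENNReal.toReal_pos (ne_of_gt hBpos) hBfin
  nlinarith [hge.trans (hle1.trans_eq h0)]

lemma phiF_strict (hfc : ContinuousOn f (cube d)) (hfnn : ∀ x ∈ cube d, 0 ≤ f x)
    (hA : AssumptionA d f) {x : Fin d → ℝ} (hx : x ∈ cube d) (j : Fin d)
    (hs : 0 < sFun d f (j:ℕ) x) {a b : ℝ} (ha : a ∈ Set.Icc (0:ℝ) 1)
    (hb : b ∈ Set.Icc (0:ℝ) 1) (hab : a < b) :
    phiF d f x j a < phiF d f x j b := by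
  have hsub := phiF_sub hfc hx j ha hb
  have hIcc : Set.Ioc a b ⊆ Set.Icc (0:ℝ) 1 := fun t ht =>
    ⟨le_trans ha.1 (le_of_lt ht.1), le_trans ht.2 hb.2⟩
  suffices hpos : 0 < ∫ s in a..b, gF d f x j s by linarith
  rw [intervalIntegral.integral_pos_iff_support_of_nonneg_ae' ?_ (gF_ii hfc hx j ha hb)]
  rotate_left
  · rw [Set.uIoc_of_le (le_of_lt hab)]
    filter_upwards [ae_restrict_mem measurableSet_Ioc] with t ht
    exact gF_nonneg hfnn hx j (hIcc ht)
  refine ⟨hab, ?_⟩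
  -- find a point in (a,b) where gF is positive
  have hexc : ∃ c ∈ Set.Ioo a b, 0 < gF d f x j c := by
    by_contra hno
    push_neg at hno
    have hgz : ∀ c ∈ Set.Ioo a b, gF d f x j c = 0 := fun c hc =>
      le_antisymm (hno c hc) (gF_nonneg hfnn hx j ⟨le_trans ha.1 (le_of_lt hc.1),
        le_trans (le_of_lt hc.2) hb.2⟩)
    -- find a point of the slice where f is positive
    have hnall : ¬ ∀ y ∈ cube d, f (mixf d (j:ℕ) x y) = 0 := by
      intro hall
      have : sFun d f (j:ℕ) x = 0 := by
        rw [sFun_eq]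
        rw [setIntegral_congr_fun cube_meas hall]
        simp
      exact absurd this (ne_of_gt hs)
    push_neg at hnall
    obtain ⟨y0, hy0c, hy0⟩ := hnall
    set p := mixf d (j:ℕ) x y0 with hp
    have hpc : p ∈ cube d := mix_mem hx hy0c
    have hppos : 0 < f p := lt_of_le_of_ne (hfnn p hpc) (Ne.symm hy0)
    rcases hA.2 j p hpc with hleft | hnull
    · have := hleft (p j) (mem_cube.1 hpc j)
      rw [Function.update_eq_self] at this
      exact absurd this (ne_of_gt hppos)
    · have hsubset : Set.Ioo a b ⊆ {t : ℝ | t ∈ Set.Icc (0:ℝ) 1 ∧ f (Function.update p j t) = 0} := by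
        intro t ht
        have htI : t ∈ Set.Icc (0:ℝ) 1 :=
          ⟨le_trans ha.1 (le_of_lt ht.1), le_trans (le_of_lt ht.2) hb.2⟩
        refine ⟨htI, ?_⟩
        have hg0 : sFun d f ((j:ℕ)+1) (Function.update x j t) = 0 := hgz t ht
        have hint : ∀ y ∈ cube d, f (mixf d ((j:ℕ)+1) (Function.update x j t) y) = 0 := by
          refine eq_zero_of_integral_zero (cont_mix hfc (update_mem_cube hx j htI) _)
            (fun y hy => hfnn _ (mix_mem (update_mem_cube hx j htI) hy)) hg0
        have := hint y0 hy0c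
        convert this using 2
        funext i
        unfold mixf
        rcases lt_trichotomy (i:ℕ) (j:ℕ) with h | h | h
        · have hij : i ≠ j := fun hh => by simp [hh] at h
          rw [Function.update_of_ne hij, if_pos (Nat.lt_succ_of_lt h), Function.update_of_ne hij,
            hp]
          show mixf d (j:ℕ) x y0 i = x i
          unfold mixf
          rw [if_pos h]
        · have hij : i = j := Fin.ext h
          subst hij
          rw [Function.update_self, if_pos (Nat.lt_succ_of_le h.le), Function.update_self]
        · have hij : i ≠ j := fun hh => by simp [hh] at h
          rw [Function.update_of_ne hij, if_neg (not_lt.2 (Nat.succ_le_of_lt h)), hp]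
          show mixf d (j:ℕ) x y0 i = y0 i
          unfold mixf
          rw [if_neg (not_lt.2 h.le)]
      have hvol : volume (Set.Ioo a b) = 0 :=
        measure_mono_null hsubset hnull
      rw [Real.volume_Ioo] at hvol
      exact absurd hvol (by simp [ENNReal.ofReal_eq_zero]; linarith)
  obtain ⟨c, hc, hgc⟩ := hexc
  have hcI : c ∈ Set.Icc (0:ℝ) 1 :=
    ⟨le_trans ha.1 (le_of_lt hc.1), le_trans (le_of_lt hc.2) hb.2⟩
  have hev : ∀ᶠ t in nhdsWithin c (Set.Icc (0:ℝ) 1), 0 < gF d f x j t :=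
    (gF_contOn hfc hx j c hcI) (Ioi_mem_nhds hgc)
  obtain ⟨ε, hε, hball⟩ := Metric.mem_nhdsWithin_iff.1 hev
  set W := Set.Ioo (max a (c - ε)) (min b (c + ε)) with hW
  have hWsub : W ⊆ Function.support (gF d f x j) ∩ Set.Ioc a b := by
    intro t ht
    have ht1 : a < t := lt_of_le_of_lt (le_max_left _ _) ht.1
    have ht2 : t < b := lt_of_lt_of_le ht.2 (min_le_left _ _)
    have htI : t ∈ Set.Icc (0:ℝ) 1 := hIcc ⟨ht1, le_of_lt ht2⟩
    have htb : t ∈ Metric.ball c ε := by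
      rw [Metric.mem_ball, Real.dist_eq, abs_sub_lt_iff]
      constructor
      · linarith [ht.2.trans_le (min_le_right b (c + ε))]
      · linarith [(le_max_right a (c - ε)).trans_lt ht.1]
    exact ⟨ne_of_gt (hball ⟨htb, htI⟩), ⟨ht1, le_of_lt ht2⟩⟩
  refine lt_of_lt_of_le ?_ (measure_mono hWsub)
  rw [hW, Real.volume_Ioo]
  refine ENNReal.ofReal_pos.2 ?_
  have h1 : max a (c - ε) < c := max_lt hc.1 (by linarith)
  have h2 : c < min b (c + ε) := lt_min hc.2 (by linarith)
  linarith
lemma fin_ne_of_val_lt {i j : Fin d} (h : (i:ℕ) < (j:ℕ)) : i ≠ j :=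
  fun hh => absurd (congrArg Fin.val hh) (ne_of_lt h)

lemma gF_congr {u v : Fin d → ℝ} {j : Fin d} (h : ∀ i : Fin d, (i:ℕ) < (j:ℕ) → u i = v i) :
    gF d f u j = gF d f v j := by
  funext s
  refine sFun_congr fun k hk => ?_
  rcases eq_or_ne ((k:ℕ)) ((j:ℕ)) with he | hne
  · have : k = j := Fin.ext he
    subst this
    rw [Function.update_self, Function.update_self]
  · have hkj : k ≠ j := fun hh => hne (congrArg Fin.val hh)
    rw [Function.update_of_ne hkj, Function.update_of_ne hkj]
    exact h k (by omega)

lemma phiF_congr {u v : Fin d → ℝ} {j : Fin d} (h : ∀ i : Fin d, (i:ℕ) < (j:ℕ) → u i = v i) :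
    phiF d f u j = phiF d f v j := by
  funext t
  unfold phiF
  rw [gF_congr h]

lemma KRinv_dep {x y : Fin d → ℝ} {j : Fin d} (h : ∀ i : Fin d, (i:ℕ) ≤ (j:ℕ) → x i = y i) :
    KRinv d f x j = KRinv d f y j := by
  have hs : sFun d f (j:ℕ) x = sFun d f (j:ℕ) y := sFun_congr fun i hi => h i (le_of_lt hi)
  have hxj : x j = y j := h j le_rfl
  have hphi : phiF d f x j = phiF d f y j := phiF_congr fun i hi => h i (le_of_lt hi)
  rw [KRinv_apply, KRinv_apply, hs, hxj, hphi]

lemma KRinv_mem (hfc : ContinuousOn f (cube d)) (hfnn : ∀ x ∈ cube d, 0 ≤ f x)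
    {x : Fin d → ℝ} (hx : x ∈ cube d) : KRinv d f x ∈ cube d := by
  rw [mem_cube]
  intro j
  rw [KRinv_apply]
  split_ifs with hs
  · have hxj : x j ∈ Set.Icc (0:ℝ) 1 := mem_cube.1 hx j
    constructor
    · exact div_nonneg (phiF_nonneg hfc hfnn hx j hxj) hs.le
    · rw [div_le_one hs]
      exact phiF_le hfc hfnn hx j hxj
  · exact mem_cube.1 hx j

lemma KRinv_prefix (hfc : ContinuousOn f (cube d)) (hfnn : ∀ x ∈ cube d, 0 ≤ f x)
    (hA : AssumptionA d f) {u v : Fin d → ℝ} (hu : u ∈ cube d) (hv : v ∈ cube d) :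
    ∀ m : ℕ, (∀ i : Fin d, (i:ℕ) < m → KRinv d f u i = KRinv d f v i) →
      ∀ i : Fin d, (i:ℕ) < m → u i = v i := by
  intro m
  induction m with
  | zero => exact fun _ i hi => absurd hi (Nat.not_lt_zero _)
  | succ m ih =>
    intro hKR i hi
    have hpre : ∀ k : Fin d, (k:ℕ) < m → u k = v k :=
      ih fun k hk => hKR k (Nat.lt_succ_of_lt hk)
    rcases Nat.lt_or_ge (i:ℕ) m with h | h
    · exact hpre i h
    · have him : (i:ℕ) = m := by omega
      have hs : sFun d f (i:ℕ) u = sFun d f (i:ℕ) v :=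
        sFun_congr fun k hk => hpre k (by omega)
      have hK := hKR i hi
      rw [KRinv_apply, KRinv_apply, hs] at hK
      by_cases hpos : 0 < sFun d f (i:ℕ) v
      · rw [if_pos hpos, if_pos hpos] at hK
        have hphi : phiF d f u i = phiF d f v i := phiF_congr fun k hk => hpre k (by omega)
        rw [hphi] at hK
        have heq : phiF d f v i (u i) = phiF d f v i (v i) := by
          field_simp [ne_of_gt hpos] at hK
          exact hK
        have hui : u i ∈ Set.Icc (0:ℝ) 1 := mem_cube.1 hu i
        have hvi : v i ∈ Set.Icc (0:ℝ) 1 := mem_cube.1 hv i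
        rcases lt_trichotomy (u i) (v i) with hlt | he | hgt
        · exact absurd heq (ne_of_lt (phiF_strict hfc hfnn hA hv i hpos hui hvi hlt))
        · exact he
        · exact absurd heq.symm (ne_of_lt (phiF_strict hfc hfnn hA hv i hpos hvi hui hgt))
      · rw [if_neg hpos, if_neg hpos] at hK
        exact hK

lemma exists_coord (hfc : ContinuousOn f (cube d)) (hfnn : ∀ x ∈ cube d, 0 ≤ f x)
    {x : Fin d → ℝ} (hx : x ∈ cube d) (j : Fin d) {c : ℝ} (hc : c ∈ Set.Icc (0:ℝ) 1) :
    ∃ t ∈ Set.Icc (0:ℝ) 1, KRinv d f (Function.update x j t) j = c := by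
  have hsfix : ∀ t : ℝ, sFun d f (j:ℕ) (Function.update x j t) = sFun d f (j:ℕ) x := fun t =>
    sFun_congr fun k hk => Function.update_of_ne (fin_ne_of_val_lt hk) _ _
  by_cases hs : 0 < sFun d f (j:ℕ) x
  · have hphifix : ∀ t : ℝ, phiF d f (Function.update x j t) j = phiF d f x j := fun t =>
      phiF_congr fun k hk => Function.update_of_ne (fin_ne_of_val_lt hk) _ _
    set ψ : ℝ → ℝ := fun t => phiF d f x j t / sFun d f (j:ℕ) x with hψ
    have hψc : ContinuousOn ψ (Set.Icc (0:ℝ) 1) := (phiF_contOn hfc hx j).div_const _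
    have h0 : ψ 0 = 0 := by simp [hψ, phiF_zero]
    have h1 : ψ 1 = 1 := by
      rw [hψ]
      simp only [phiF_one hfc hx j]
      exact div_self (ne_of_gt hs)
    have hIVT := intermediate_value_Icc zero_le_one hψc
    rw [h0, h1] at hIVT
    obtain ⟨t, htI, ht⟩ := hIVT hc
    refine ⟨t, htI, ?_⟩
    rw [KRinv_apply, if_pos (by rw [hsfix t]; exact hs), Function.update_self, hsfix t,
      hphifix t]
    exact ht
  · refine ⟨c, hc, ?_⟩
    rw [KRinv_apply, if_neg (by rw [hsfix c]; exact hs), Function.update_self]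

open Classical in
/-- chooser for the inverse construction -/
def pickT (d : ℕ) (f : (Fin d → ℝ) → ℝ) (y x : Fin d → ℝ) (j : Fin d) : ℝ :=
  if h : ∃ t ∈ Set.Icc (0:ℝ) 1, KRinv d f (Function.update x j t) j = y j then h.choose else 0

/-- the recursive construction of the preimage -/
def seqX (d : ℕ) (f : (Fin d → ℝ) → ℝ) (y : Fin d → ℝ) : ℕ → (Fin d → ℝ)
  | 0 => y
  | (k+1) => if h : k < d then
      Function.update (seqX d f y k) ⟨k, h⟩ (pickT d f y (seqX d f y k) ⟨k, h⟩)
    else seqX d f y k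

lemma exists_preimage (hfc : ContinuousOn f (cube d)) (hfnn : ∀ x ∈ cube d, 0 ≤ f x)
    {y : Fin d → ℝ} (hy : y ∈ cube d) : ∃ x ∈ cube d, KRinv d f x = y := by
  have hcube : ∀ k, seqX d f y k ∈ cube d := by
    intro k
    induction k with
    | zero => exact hy
    | succ k ihk =>
      rw [seqX]
      by_cases h : k < d
      · rw [dif_pos h]
        have hex := exists_coord hfc hfnn ihk ⟨k, h⟩ (mem_cube.1 hy ⟨k, h⟩)
        have hmem : pickT d f y (seqX d f y k) ⟨k, h⟩ ∈ Set.Icc (0:ℝ) 1 := by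
          rw [pickT, dif_pos hex]
          exact hex.choose_spec.1
        exact update_mem_cube ihk _ hmem
      · rw [dif_neg h]
        exact ihk
  have hstable : ∀ k l, k ≤ l → ∀ i : Fin d, (i:ℕ) < k → seqX d f y l i = seqX d f y k i := by
    intro k l hkl
    induction l with
    | zero =>
      intro i hi
      have : k = 0 := Nat.le_zero.1 hkl
      rw [this]
    | succ l ihl =>
      intro i hi
      rcases Nat.lt_or_ge k (l+1) with h | h
      · have hkl' : k ≤ l := by omega
        rw [← ihl hkl' i hi]
        rw [seqX]
        by_cases hld : l < d
        · rw [dif_pos hld]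
          have : i ≠ (⟨l, hld⟩ : Fin d) := by
            intro hh
            have := congrArg Fin.val hh
            simp at this
            omega
          rw [Function.update_of_ne this]
        · rw [dif_neg hld]
      · have : k = l + 1 := by omega
        rw [this]
  have hspec : ∀ j : Fin d, KRinv d f (seqX d f y ((j:ℕ)+1)) j = y j := by
    intro j
    have h : (j:ℕ) < d := j.isLt
    have hex := exists_coord hfc hfnn (hcube (j:ℕ)) ⟨(j:ℕ), h⟩ (mem_cube.1 hy ⟨(j:ℕ), h⟩)
    rw [seqX, dif_pos h]
    rw [pickT, dif_pos hex]
    have := hex.choose_spec.2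
    simpa [Fin.eta] using this
  refine ⟨seqX d f y d, hcube d, funext fun j => ?_⟩
  have hdep : KRinv d f (seqX d f y d) j = KRinv d f (seqX d f y ((j:ℕ)+1)) j :=
    KRinv_dep fun i hi => hstable ((j:ℕ)+1) d j.isLt i (by omega)
  rw [hdep, hspec j]

lemma KRinv_bijOn (hfc : ContinuousOn f (cube d)) (hfnn : ∀ x ∈ cube d, 0 ≤ f x)
    (hA : AssumptionA d f) : Set.BijOn (KRinv d f) (cube d) (cube d) := by
  refine ⟨fun x hx => KRinv_mem hfc hfnn hx, ?_, ?_⟩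
  · intro u hu v hv h
    funext i
    exact KRinv_prefix hfc hfnn hA hu hv d (fun k _ => congrFun h k) i i.isLt
  · intro z hz
    obtain ⟨x, hx, he⟩ := exists_preimage hfc hfnn hz
    exact ⟨x, hx, he⟩

lemma KR_invOn (hfc : ContinuousOn f (cube d)) (hfnn : ∀ x ∈ cube d, 0 ≤ f x)
    (hA : AssumptionA d f) : Set.InvOn (KRmap d f) (KRinv d f) (cube d) (cube d) := by
  have hbij := KRinv_bijOn hfc hfnn hA
  have h1 := hbij.invOn_invFunOn
  constructor
  · intro x hx
    show KRmap d f (KRinv d f x) = x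
    rw [KRmap, if_pos (hbij.mapsTo hx)]
    exact h1.1 hx
  · intro z hz
    show KRinv d f (KRmap d f z) = z
    rw [KRmap, if_pos hz]
    exact h1.2 hz

lemma KRmap_mapsTo (hfc : ContinuousOn f (cube d)) (hfnn : ∀ x ∈ cube d, 0 ≤ f x)
    (hA : AssumptionA d f) : Set.MapsTo (KRmap d f) (cube d) (cube d) := by
  intro z hz
  rw [KRmap, if_pos hz]
  exact (KRinv_bijOn hfc hfnn hA).surjOn.mapsTo_invFunOn hz

lemma KRmap_bijOn (hfc : ContinuousOn f (cube d)) (hfnn : ∀ x ∈ cube d, 0 ≤ f x)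
    (hA : AssumptionA d f) : Set.BijOn (KRmap d f) (cube d) (cube d) :=
  Set.InvOn.bijOn ((KR_invOn hfc hfnn hA).symm) (KRmap_mapsTo hfc hfnn hA)
    (KRinv_bijOn hfc hfnn hA).mapsTo
lemma sFun_abs_le (hfc : ContinuousOn f (cube d)) {C : ℝ}
    (hC : ∀ z ∈ cube d, |f z| ≤ C) {x : Fin d → ℝ} (hx : x ∈ cube d) (j : ℕ) :
    |sFun d f j x| ≤ C := by
  rw [sFun_eq]
  have h := norm_setIntegral_le_of_norm_le_const (μ := volume) (s := cube d) (C := C)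
    (f := fun y => f (mixf d j x y))
    (by rw [volume_cube]; exact ENNReal.one_lt_top)
    (fun y hy => by rw [Real.norm_eq_abs]; exact hC _ (mix_mem hx hy))
  rwa [measureReal_def, volume_cube, ENNReal.toReal_one, mul_one, Real.norm_eq_abs] at h

/-- the auxiliary parametric integral with indicator -/
def PhiI (d : ℕ) (f : (Fin d → ℝ) → ℝ) (j : Fin d) (x : Fin d → ℝ) : ℝ :=
  ∫ t in Set.Ioc (0:ℝ) 1, Set.indicator (Set.Iic (x j)) (gF d f x j) t

lemma phiF_eq_ind (hfc : ContinuousOn f (cube d)) {x : Fin d → ℝ} (hx : x ∈ cube d) (j : Fin d) :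
    phiF d f x j (x j) = PhiI d f j x := by
  have hxj : x j ∈ Set.Icc (0:ℝ) 1 := mem_cube.1 hx j
  rw [phiF, intervalIntegral.integral_of_le hxj.1, PhiI,
    setIntegral_indicator measurableSet_Iic]
  have hset : Set.Ioc (0:ℝ) 1 ∩ Set.Iic (x j) = Set.Ioc 0 (x j) := by
    ext t
    simp only [Set.mem_Ioc, Set.mem_inter_iff, Set.mem_Iic]
    constructor
    · rintro ⟨⟨h1, _⟩, h3⟩
      exact ⟨h1, h3⟩
    · rintro ⟨h1, h2⟩
      exact ⟨⟨h1, le_trans h2 hxj.2⟩, h2⟩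
  rw [hset]

lemma PhiI_contOn (hfc : ContinuousOn f (cube d)) (j : Fin d) :
    ContinuousOn (PhiI d f j) (cube d) := by
  obtain ⟨C, hC0, hC⟩ := exists_bound hfc
  intro x0 hx0
  apply continuousWithinAt_of_dominated (bound := fun _ => C)
  · filter_upwards [self_mem_nhdsWithin] with x hx
    refine AEStronglyMeasurable.indicator ?_ measurableSet_Iic
    have h1 : AEStronglyMeasurable (gF d f x j) (volume.restrict (Set.Icc (0:ℝ) 1)) :=
      (gF_contOn hfc hx j).aestronglyMeasurable measurableSet_Icc
    exact h1.mono_measure (Measure.restrict_mono Set.Ioc_subset_Icc_self le_rfl)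
  · filter_upwards [self_mem_nhdsWithin] with x hx
    filter_upwards [ae_restrict_mem measurableSet_Ioc] with t ht
    rw [Set.indicator_apply]
    split_ifs with hind
    · rw [Real.norm_eq_abs, gF]
      exact sFun_abs_le hfc hC (update_mem_cube hx j ⟨ht.1.le, ht.2⟩) _
    · rw [norm_zero]; exact hC0
  · refine integrableOn_const ?_
    rw [Real.volume_Ioc]
    exact ENNReal.ofReal_ne_top
  · have hne : ∀ᵐ t : ℝ, t ≠ x0 j := by
      refine (MeasureTheory.ae_iff).2 ?_
      simp
    filter_upwards [ae_restrict_mem measurableSet_Ioc, ae_restrict_of_ae hne] with t ht htne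
    have htI : t ∈ Set.Icc (0:ℝ) 1 := ⟨ht.1.le, ht.2⟩
    have hgc : ContinuousWithinAt (fun x => gF d f x j t) (cube d) x0 := by
      have hupd : Continuous (fun x : Fin d → ℝ => Function.update x j t) := by
        refine continuous_pi fun i => ?_
        by_cases h : i = j
        · simp only [Function.update_apply, h, if_pos]
          exact continuous_const
        · simp only [Function.update_apply, if_neg h]
          exact continuous_apply i
      exact ((sFun_continuousOn hfc ((j:ℕ)+1)).comp hupd.continuousOn
        fun x hx => update_mem_cube hx j htI) x0 hx0
    rcases lt_or_gt_of_ne htne with hlt | hgt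
    · -- t < x0 j : eventually the indicator equals gF
      have hev : ∀ᶠ x in nhdsWithin x0 (cube d), t < x j := by
        refine Filter.Eventually.filter_mono nhdsWithin_le_nhds ?_
        have : {x : Fin d → ℝ | x j ∈ Set.Ioi t} ∈ nhds x0 :=
          (continuous_apply j).continuousAt.preimage_mem_nhds (Ioi_mem_nhds hlt)
        filter_upwards [this] with x hx
        exact hx
      refine hgc.congr_of_eventuallyEq ?_ ?_
      · filter_upwards [hev] with x hx
        rw [Set.indicator_of_mem (Set.mem_Iic.2 hx.le)]
      · rw [Set.indicator_of_mem (Set.mem_Iic.2 hlt.le)]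
    · -- x0 j < t : eventually the indicator is 0
      have hev : ∀ᶠ x in nhdsWithin x0 (cube d), x j < t := by
        refine Filter.Eventually.filter_mono nhdsWithin_le_nhds ?_
        have : {x : Fin d → ℝ | x j ∈ Set.Iio t} ∈ nhds x0 :=
          (continuous_apply j).continuousAt.preimage_mem_nhds (Iio_mem_nhds hgt)
        filter_upwards [this] with x hx
        exact hx
      refine (continuousWithinAt_const (b := (0:ℝ))).congr_of_eventuallyEq ?_ ?_
      · filter_upwards [hev] with x hx
        rw [Set.indicator_of_notMem (by simp [Set.mem_Iic]; exact hx)]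
      · rw [Set.indicator_of_notMem (by simp [Set.mem_Iic]; exact hgt)]

/-- the restriction of `KRinv` to the cube is measurable -/
lemma K_meas (hfc : ContinuousOn f (cube d)) :
    Measurable ((cube d).restrict (KRinv d f)) := by
  rw [measurable_pi_iff]
  intro j
  have hs : Continuous (fun x : cube d => sFun d f (j:ℕ) x.1) :=
    continuousOn_iff_continuous_restrict.1 (sFun_continuousOn hfc (j:ℕ))
  have hPhi : Continuous (fun x : cube d => PhiI d f j x.1) :=
    continuousOn_iff_continuous_restrict.1 (PhiI_contOn hfc j)
  have hxj : Continuous (fun x : cube d => x.1 j) :=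
    (continuous_apply j).comp continuous_subtype_val
  have heq : ∀ x : cube d, (cube d).restrict (KRinv d f) x j =
      if 0 < sFun d f (j:ℕ) x.1 then PhiI d f j x.1 / sFun d f (j:ℕ) x.1 else x.1 j := by
    intro x
    show KRinv d f x.1 j = _
    rw [KRinv_apply]
    split_ifs with h
    · rw [phiF_eq_ind hfc x.2 j]
    · rfl
  simp only [heq]
  refine Measurable.ite ?_ (hPhi.measurable.div hs.measurable) hxj.measurable
  exact measurableSet_lt measurable_const hs.measurable

lemma image_meas (hfc : ContinuousOn f (cube d)) (hfnn : ∀ x ∈ cube d, 0 ≤ f x)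
    (hA : AssumptionA d f) {B : Set (Fin d → ℝ)} (hB : B ⊆ cube d) (hBm : MeasurableSet B) :
    MeasurableSet (KRinv d f '' B) := by
  haveI : StandardBorelSpace (cube d) := cube_meas.standardBorel
  have hKm := K_meas hfc
  have hKinj : Function.Injective ((cube d).restrict (KRinv d f)) := by
    intro u v huv
    have := (KRinv_bijOn hfc hfnn hA).injOn u.2 v.2 huv
    exact Subtype.ext this
  have hemb := hKm.measurableEmbedding hKinj
  have himg : KRinv d f '' B = (cube d).restrict (KRinv d f) '' (Subtype.val ⁻¹' B) := by
    ext z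
    constructor
    · rintro ⟨x, hxB, rfl⟩
      exact ⟨⟨x, hB hxB⟩, hxB, rfl⟩
    · rintro ⟨⟨x, hx⟩, hxB, rfl⟩
      exact ⟨x, hxB, rfl⟩
  rw [himg]
  exact hemb.measurableSet_image.2 (measurable_subtype_coe hBm)

lemma KRmap_meas (hfc : ContinuousOn f (cube d)) (hfnn : ∀ x ∈ cube d, 0 ≤ f x)
    (hA : AssumptionA d f) : Measurable (KRmap d f) := by
  intro A hA'
  have hinv := KR_invOn hfc hfnn hA
  have hbij := KRinv_bijOn hfc hfnn hA
  have hmt := KRmap_mapsTo hfc hfnn hA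
  have hset : KRmap d f ⁻¹' A = (KRinv d f '' (A ∩ cube d)) ∪ (A \ cube d) := by
    ext z
    simp only [Set.mem_preimage, Set.mem_union, Set.mem_diff, Set.mem_image, Set.mem_inter_iff]
    constructor
    · intro hz
      by_cases hzc : z ∈ cube d
      · left
        refine ⟨KRmap d f z, ⟨hz, hmt hzc⟩, hinv.2 hzc⟩
      · right
        rw [KRmap, if_neg hzc] at hz
        exact ⟨hz, hzc⟩
    · rintro (⟨x, ⟨hxA, hxc⟩, rfl⟩ | ⟨hzA, hzc⟩)
      · rw [hinv.1 hxc]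
        exact hxA
      · rw [KRmap, if_neg hzc]
        exact hzA
  rw [hset]
  exact (image_meas hfc hfnn hA Set.inter_subset_right (hA'.inter cube_meas)).union
    (hA'.diff cube_meas)
end KR

open KR in
theorem stmt2 (d : ℕ) (hd : 0 < d) (f : (Fin d → ℝ) → ℝ)
    (hfc : ContinuousOn f (cube d))
    (hfnn : ∀ x ∈ cube d, 0 ≤ f x)
    (hA : AssumptionA d f) :
    (∀ B : Set (Fin d → ℝ), B ⊆ cube d → MeasurableSet B → MeasurableSet (KRinv d f '' B)) ∧
    Measurable (KRmap d f) ∧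
    Set.BijOn (KRmap d f) (cube d) (cube d) ∧
    Set.InvOn (KRmap d f) (KRinv d f) (cube d) (cube d) ∧
    (∀ j : Fin d, ∀ x y : Fin d → ℝ, x ∈ cube d → y ∈ cube d →
      (∀ i : Fin d, i ≤ j → x i = y i) → KRmap d f x j = KRmap d f y j) ∧
    (∀ j : Fin d, ∀ x ∈ cube d,
      StrictMonoOn (fun t => KRmap d f (Function.update x j t) j) (Set.Icc (0:ℝ) 1)) := by
  have hinv := KR_invOn hfc hfnn hA
  have hbij := KRinv_bijOn hfc hfnn hA
  have hmt := KRmap_mapsTo hfc hfnn hA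
  refine ⟨fun B hB hBm => image_meas hfc hfnn hA hB hBm, KRmap_meas hfc hfnn hA,
    KRmap_bijOn hfc hfnn hA, hinv, ?_, ?_⟩
  · -- triangularity
    intro j x y hx hy h
    have hu : KRmap d f x ∈ cube d := hmt hx
    have hv : KRmap d f y ∈ cube d := hmt hy
    have hKu : KRinv d f (KRmap d f x) = x := hinv.2 hx
    have hKv : KRinv d f (KRmap d f y) = y := hinv.2 hy
    refine KRinv_prefix hfc hfnn hA hu hv ((j:ℕ)+1) (fun i hi => ?_) j (Nat.lt_succ_self _)
    rw [hKu, hKv]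
    exact h i (Fin.le_def.2 (by omega))
  · -- strict monotonicity in the last variable
    intro j x hx t ht t' ht' htt
    set u := KRmap d f (Function.update x j t) with hu_def
    set u' := KRmap d f (Function.update x j t') with hu'_def
    have hxt : Function.update x j t ∈ cube d := update_mem_cube hx j ht
    have hxt' : Function.update x j t' ∈ cube d := update_mem_cube hx j ht'
    have hu : u ∈ cube d := hmt hxt
    have hu' : u' ∈ cube d := hmt hxt'
    have hKu : KRinv d f u = Function.update x j t := hinv.2 hxt
    have hKu' : KRinv d f u' = Function.update x j t' := hinv.2 hxt'
    have hagree : ∀ i : Fin d, (i:ℕ) < (j:ℕ) → u i = u' i := by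
      refine KRinv_prefix hfc hfnn hA hu hu' (j:ℕ) (fun i hi => ?_)
      rw [hKu, hKu']
      rw [Function.update_of_ne (fin_ne_of_val_lt hi), Function.update_of_ne (fin_ne_of_val_lt hi)]
    have hs : sFun d f (j:ℕ) u = sFun d f (j:ℕ) u' := sFun_congr hagree
    have hKuj : KRinv d f u j = t := by rw [hKu, Function.update_self]
    have hKuj' : KRinv d f u' j = t' := by rw [hKu', Function.update_self]
    show u j < u' j
    by_cases hpos : 0 < sFun d f (j:ℕ) u
    · have hphi : phiF d f u j = phiF d f u' j := phiF_congr hagree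
      rw [KRinv_apply, if_pos hpos] at hKuj
      rw [KRinv_apply, if_pos (hs ▸ hpos)] at hKuj'
      rw [← hs] at hKuj'
      rw [hphi] at hKuj
      have h1 : phiF d f u' j (u j) = t * sFun d f (j:ℕ) u :=
        (div_eq_iff (ne_of_gt hpos)).1 hKuj
      have h2 : phiF d f u' j (u' j) = t' * sFun d f (j:ℕ) u :=
        (div_eq_iff (ne_of_gt hpos)).1 hKuj'
      have hlt : phiF d f u' j (u j) < phiF d f u' j (u' j) := by
        rw [h1, h2]
        exact mul_lt_mul_of_pos_right htt hpos
      by_contra hcon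
      push_neg at hcon
      have := phiF_mono hfc hfnn hu' j (mem_cube.1 hu' j) (mem_cube.1 hu j) hcon
      exact absurd hlt (not_lt.2 this)
    · rw [KRinv_apply, if_neg hpos] at hKuj
      rw [KRinv_apply, if_neg (hs ▸ hpos)] at hKuj'
      rw [hKuj, hKuj']
      exact htt
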